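/- Let C be a finite category, c an object, s, t ∈ C_c = C(c,c), and J a regular J-class of the consolidation C^cd with J ∩ C_c = ∅ and J ∉ {{0},{1}}. Then for all idempotents x, y ∈ J, one has xsy = 0 = xty in C^cd. Consequently s and t are identified by the generalized-group-mapping congruence associated to J. -/

import Mathlib

/-- A finite category presented by its set of arrows with a partial composition. -/
structure FinCat (Obj : Type) where
  Arr : Type
  src : Arr → Obj
  tgt : Arr → Obj
  id : Obj → Arr
  comp : (f g : Arr) → tgt f = src g → Arr
  src_id : ∀ a, src (id a) = a
  tgt_id : ∀ a, tgt (id a) = a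
  src_comp : ∀ f g h, src (comp f g h) = src f
  tgt_comp : ∀ f g h, tgt (comp f g h) = tgt g
  id_comp : ∀ (f : Arr) (h : tgt (id (src f)) = src f), comp (id (src f)) f h = f
  comp_id : ∀ (f : Arr) (h : tgt f = src (id (tgt f))), comp f (id (tgt f)) h = f
  assoc : ∀ (f g k : Arr) (h1 : tgt f = src g) (h2 : tgt g = src k) h3 h4,
    comp (comp f g h1) k h3 = comp f (comp g k h2) h4

/-- The underlying set of the consolidation monoid `C^cd`:
arrows of `C` together with an adjoined zero and identity. -/
inductive Cd {Obj : Type} (C : FinCat Obj) where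
  | zero : Cd C
  | one : Cd C
  | arr : C.Arr → Cd C

variable {Obj : Type} [DecidableEq Obj]

/-- Multiplication of the consolidation: composition where defined, `0` otherwise,
with `1` an adjoined identity and `0` absorbing. -/
def cdMul (C : FinCat Obj) : Cd C → Cd C → Cd C
  | .one, x => x
  | .zero, _ => .zero
  | x, .one => x
  | _, .zero => .zero
  | .arr f, .arr g => if h : C.tgt f = C.src g then .arr (C.comp f g h) else .zero

theorem cdMul_zero (C : FinCat Obj) (x : Cd C) : cdMul C x Cd.zero = Cd.zero := by
  cases x <;> rfl
theorem cdZero_mul (C : FinCat Obj) (x : Cd C) : cdMul C Cd.zero x = Cd.zero := by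
  cases x <;> rfl
theorem cdMul_one (C : FinCat Obj) (x : Cd C) : cdMul C x Cd.one = x := by
  cases x <;> rfl
theorem cdOne_mul (C : FinCat Obj) (x : Cd C) : cdMul C Cd.one x = x := by
  cases x <;> rfl

theorem cdMul_assoc (C : FinCat Obj) (x y z : Cd C) :
    cdMul C (cdMul C x y) z = cdMul C x (cdMul C y z) := by
  cases x <;> cases y <;> cases z <;>
    (try simp only [cdMul_zero, cdZero_mul, cdMul_one, cdOne_mul]) <;> (try rfl)
  case arr.arr.arr f g k =>
    by_cases h1 : C.tgt f = C.src g
    · by_cases h2 : C.tgt g = C.src k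
      · show cdMul C (dite _ _ _) _ = cdMul C _ (dite _ _ _)
        rw [dif_pos h1, dif_pos h2]
        show dite _ _ _ = dite _ _ _
        rw [dif_pos (show C.tgt (C.comp f g h1) = C.src k by rw [C.tgt_comp]; exact h2),
            dif_pos (show C.tgt f = C.src (C.comp g k h2) by rw [C.src_comp]; exact h1)]
        exact congrArg Cd.arr (C.assoc f g k h1 h2 _ _)
      · show cdMul C (dite _ _ _) _ = cdMul C _ (dite _ _ _)
        rw [dif_pos h1, dif_neg h2]
        show dite _ _ _ = Cd.zero
        rw [dif_neg (show ¬ C.tgt (C.comp f g h1) = C.src k by rw [C.tgt_comp]; exact h2)]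
    · show cdMul C (dite _ _ _) _ = cdMul C _ (cdMul C _ _)
      rw [dif_neg h1]
      by_cases h2 : C.tgt g = C.src k
      · show Cd.zero = cdMul C _ (dite _ _ _)
        rw [dif_pos h2]
        show Cd.zero = dite _ _ _
        rw [dif_neg (show ¬ C.tgt f = C.src (C.comp g k h2) by rw [C.src_comp]; exact h1)]
      · show Cd.zero = cdMul C _ (dite _ _ _)
        rw [dif_neg h2, cdMul_zero]

instance cdMonoid (C : FinCat Obj) : Monoid (Cd C) where
  mul := cdMul C
  one := .one
  one_mul x := by cases x <;> rfl
  mul_one x := by cases x <;> rfl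
  mul_assoc := cdMul_assoc C

/-- Green's R-equivalence in a monoid. -/
def RE {M : Type} [Monoid M] (s t : M) : Prop := (∃ a, s * a = t) ∧ (∃ a, t * a = s)
/-- Green's L-equivalence in a monoid. -/
def LE' {M : Type} [Monoid M] (s t : M) : Prop := (∃ a, a * s = t) ∧ (∃ a, a * t = s)
/-- Green's H-equivalence in a monoid. -/
def HE {M : Type} [Monoid M] (s t : M) : Prop := RE s t ∧ LE' s t
/-- Green's J-equivalence in a monoid. -/
def JE {M : Type} [Monoid M] (s t : M) : Prop :=
  (∃ a b, a * s * b = t) ∧ (∃ a b, a * t * b = s)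

/-- Green's R-equivalence relative to a subset `S` (multipliers taken in `S`). -/
def REOn {M : Type} [Monoid M] (S : Set M) (s t : M) : Prop :=
  (∃ a ∈ S, s * a = t) ∧ (∃ a ∈ S, t * a = s)
def LEOn {M : Type} [Monoid M] (S : Set M) (s t : M) : Prop :=
  (∃ a ∈ S, a * s = t) ∧ (∃ a ∈ S, a * t = s)
def HEOn {M : Type} [Monoid M] (S : Set M) (s t : M) : Prop := REOn S s t ∧ LEOn S s t
def JEOn {M : Type} [Monoid M] (S : Set M) (s t : M) : Prop :=
  (∃ a ∈ S, ∃ b ∈ S, a * s * b = t) ∧ (∃ a ∈ S, ∃ b ∈ S, a * t * b = s)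

/-- The local monoid `C_c = C(c,c)`, viewed as a subset of the consolidation. -/
def locSet (C : FinCat Obj) (c : Obj) : Set (Cd C) :=
  {x | ∃ f : C.Arr, x = Cd.arr f ∧ C.src f = c ∧ C.tgt f = c}

/-- The J-preorder in a monoid: `s ≥_J t` iff `t ∈ M s M`. -/
def mJge {M : Type} [Monoid M] (s t : M) : Prop := ∃ a b : M, a * s * b = t

/-- `F(J)`: the set of elements that are not J-above `J`. -/
def FJ {M : Type} [Monoid M] (J : Set M) : Set M := {u : M | ∀ z ∈ J, ¬ mJge u z}

section MyAux

lemma my_je_symm {M : Type} [Monoid M] {s t : M} (h : JE s t) : JE t s := ⟨h.2, h.1⟩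

lemma my_jge_trans {M : Type} [Monoid M] {a b c : M} (h1 : mJge a b) (h2 : mJge b c) :
    mJge a c := by
  obtain ⟨p, q, hpq⟩ := h1
  obtain ⟨r, u, hru⟩ := h2
  exact ⟨r * p, q * u, by rw [← hru, ← hpq]; simp [mul_assoc]⟩

lemma my_je_trans {M : Type} [Monoid M] {s t u : M} (h1 : JE s t) (h2 : JE t u) : JE s u :=
  ⟨my_jge_trans h1.1 h2.1, my_jge_trans h2.2 h1.2⟩

lemma my_stab {M : Type} [Monoid M] [Finite M] {x u v : M} (h : u * x * v = x) :
    ∃ d : ℕ, 0 < d ∧ x * v ^ d = x := by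
  have key : ∀ n : ℕ, u ^ n * x * v ^ n = x := by
    intro n
    induction n with
    | zero => simp
    | succ n ih =>
      have e1 : u ^ (n + 1) * x * v ^ (n + 1) = u ^ n * ((u * x * v) * v ^ n) := by
        rw [pow_succ, pow_succ']
        simp [mul_assoc]
      rw [e1, h, ← mul_assoc]
      exact ih
  have main : ∀ i j : ℕ, i < j → x * v ^ i = x * v ^ j → ∃ d : ℕ, 0 < d ∧ x * v ^ d = x := by
    intro i j hlt heq
    refine ⟨j - i, Nat.sub_pos_of_lt hlt, ?_⟩
    have hj : v ^ j = v ^ i * v ^ (j - i) := by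
      rw [← pow_add, Nat.add_sub_cancel' (le_of_lt hlt)]
    calc x * v ^ (j - i) = (u ^ i * x * v ^ i) * v ^ (j - i) := by rw [key i]
      _ = u ^ i * (x * v ^ j) := by rw [hj]; simp [mul_assoc]
      _ = u ^ i * (x * v ^ i) := by rw [heq]
      _ = u ^ i * x * v ^ i := by rw [mul_assoc]
      _ = x := key i
  obtain ⟨i, j, hne, hij⟩ := Finite.exists_ne_map_eq_of_infinite (fun n : ℕ => x * v ^ n)
  rcases hne.lt_or_gt with hlt | hlt
  · exact main i j hlt hij
  · exact main j i hlt hij.symm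

instance myFiniteCd (C : FinCat Obj) [Fintype C.Arr] : Finite (Cd C) := by
  have hsurj : Function.Surjective (fun o : Option (Option C.Arr) => match o with
      | none => (Cd.zero : Cd C)
      | some none => Cd.one
      | some (some f) => Cd.arr f) := by
    intro x
    cases x with
    | zero => exact ⟨none, rfl⟩
    | one => exact ⟨some none, rfl⟩
    | arr f => exact ⟨some (some f), rfl⟩
  exact Finite.of_surjective _ hsurj

lemma my_mul_def (C : FinCat Obj) (x y : Cd C) : cdMul C x y = x * y := rfl

lemma my_arr_mul_cases (C : FinCat Obj) (f : C.Arr) (w : Cd C) :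
    cdMul C (Cd.arr f) w = Cd.zero ∨
      ∃ g, cdMul C (Cd.arr f) w = Cd.arr g ∧ C.src g = C.src f := by
  cases w with
  | zero => exact Or.inl rfl
  | one => exact Or.inr ⟨f, rfl, rfl⟩
  | arr h =>
    rcases Decidable.em (C.tgt f = C.src h) with hc | hc
    · exact Or.inr ⟨C.comp f h hc, dif_pos hc, C.src_comp f h hc⟩
    · exact Or.inl (dif_neg hc)

/-- For idempotent `x` in `J`, `x * s = 0` whenever `s ∈ C_c` and `J ∩ C_c = ∅`. -/
lemma my_idem_mul_loc (C : FinCat Obj) (c : Obj) {s x : Cd C} (hs : s ∈ locSet C c)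
    (J : Set (Cd C)) (hdisj : J ∩ locSet C c = ∅)
    (h0 : Cd.zero ∉ J) (h1 : Cd.one ∉ J)
    (hx : x ∈ J) (hxx : x * x = x) : x * s = Cd.zero := by
  obtain ⟨f, hsf, hf1, hf2⟩ := hs
  obtain ⟨e, rfl⟩ : ∃ e, x = Cd.arr e := by
    cases x with
    | zero => exact absurd hx h0
    | one => exact absurd hx h1
    | arr e => exact ⟨e, rfl⟩
  have hee : C.tgt e = C.src e := by
    have h' : (if h : C.tgt e = C.src e then Cd.arr (C.comp e e h) else Cd.zero)
        = Cd.arr e := hxx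
    by_contra hne
    rw [dif_neg hne] at h'
    cases h'
  have hne : C.tgt e ≠ C.src f := by
    intro heq
    have hloc : Cd.arr e ∈ locSet C c :=
      ⟨e, rfl, hee.symm.trans (heq.trans hf1), heq.trans hf1⟩
    have hmem : Cd.arr e ∈ J ∩ locSet C c := ⟨hx, hloc⟩
    rw [hdisj] at hmem
    exact hmem
  show cdMul C (Cd.arr e) s = Cd.zero
  rw [hsf]
  exact dif_neg hne

/-- Key claim: for any `x, y` in a J-class `J` disjoint from `C_c` (and `0,1 ∉ J`),
the product `x * s * y` is not J-above `J`, i.e. it lies in `F(J)`. -/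
lemma my_key_claim (C : FinCat Obj) [Fintype C.Arr] (c : Obj)
    (s : Cd C) (hs : s ∈ locSet C c)
    (J : Set (Cd C)) (hJ : ∃ w : Cd C, J = {z | JE z w})
    (hdisj : J ∩ locSet C c = ∅)
    (h0 : Cd.zero ∉ J) (h1 : Cd.one ∉ J) :
    ∀ x ∈ J, ∀ y ∈ J, x * s * y ∈ FJ J := by
  obtain ⟨w0, rfl⟩ := hJ
  intro x hx y hy z hz hmz
  obtain ⟨a, b, hab⟩ := hmz
  have hxz : JE x z := my_je_trans hx (my_je_symm hz)
  have hxy : JE x y := my_je_trans hx (my_je_symm hy)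
  have h1' : mJge (x * (s * (y * b))) z :=
    ⟨a, 1, by rw [mul_one, ← hab]; simp [mul_assoc]⟩
  obtain ⟨u, v', huv⟩ := my_jge_trans h1' hxz.2
  have huv2 : u * x * ((s * (y * b)) * v') = x := by
    simp only [← mul_assoc] at huv ⊢
    exact huv
  obtain ⟨d, hd, hxV⟩ := my_stab huv2
  obtain ⟨k, rfl⟩ : ∃ k, d = k + 1 := ⟨d - 1, (Nat.succ_pred_eq_of_pos hd).symm⟩
  have hVform : ((s * (y * b)) * v') ^ (k + 1)
      = s * ((y * b) * (v' * ((s * (y * b)) * v') ^ k)) := by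
    rw [pow_succ']
    simp [mul_assoc]
  rw [hVform] at hxV
  obtain ⟨f, hsf, hf1, hf2⟩ := hs
  obtain ⟨ex, hxe⟩ : ∃ e, x = Cd.arr e := by
    cases x with
    | zero => exact absurd hx h0
    | one => exact absurd hx h1
    | arr e => exact ⟨e, rfl⟩
  have hcases := my_arr_mul_cases C f ((y * b) * (v' * ((s * (y * b)) * v') ^ k))
  rw [my_mul_def, ← hsf] at hcases
  rcases hcases with hV0 | ⟨g, hVg, hgsrc⟩
  · rw [hV0] at hxV
    have hx0 : x = Cd.zero := by
      rw [← hxV]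
      exact cdMul_zero C x
    rw [hx0] at hx
    exact h0 hx
  · have hgc : C.src g = c := hgsrc.trans hf1
    have htg : C.tgt g = C.src g := by
      have hxV2 := hxV
      rw [hxe, hVg] at hxV2
      have h' : (if h : C.tgt ex = C.src g then Cd.arr (C.comp ex g h) else Cd.zero)
          = Cd.arr ex := hxV2
      by_cases h : C.tgt ex = C.src g
      · rw [dif_pos h] at h'
        have he := Cd.arr.inj h'
        calc C.tgt g = C.tgt (C.comp ex g h) := (C.tgt_comp ex g h).symm
          _ = C.tgt ex := by rw [he]
          _ = C.src g := h
      · rw [dif_neg h] at h'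
        cases h'
    have hVlex : mJge y (s * ((y * b) * (v' * ((s * (y * b)) * v') ^ k))) :=
      ⟨s, b * (v' * ((s * (y * b)) * v') ^ k), by simp [mul_assoc]⟩
    have hVgex : mJge (s * ((y * b) * (v' * ((s * (y * b)) * v') ^ k))) x :=
      ⟨x, 1, by rw [mul_one]; exact hxV⟩
    have hxgeV : mJge x (s * ((y * b) * (v' * ((s * (y * b)) * v') ^ k))) :=
      my_jge_trans hxy.1 hVlex
    have hVJ : JE (s * ((y * b) * (v' * ((s * (y * b)) * v') ^ k))) w0 :=
      my_je_trans ⟨hVgex, hxgeV⟩ hx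
    have hVloc : (s * ((y * b) * (v' * ((s * (y * b)) * v') ^ k))) ∈ locSet C c :=
      ⟨g, hVg, hgc, htg.trans hgc⟩
    have hmem : (s * ((y * b) * (v' * ((s * (y * b)) * v') ^ k)))
        ∈ ({z | JE z w0} : Set (Cd C)) ∩ locSet C c := ⟨hVJ, hVloc⟩
    rw [hdisj] at hmem
    exact hmem

end MyAux

/-- if `s, t ∈ C_c` and `J` is a regular J-class of `C^cd` with
`J ∩ C_c = ∅` and `J ∉ {{0},{1}}`, then `xsy = 0 = xty` for all idempotents
`x, y ∈ J`; consequently `s` and `t` are identified by the GGM congruence at `J`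
(images under any homomorphism factoring through the Rees quotient agree for all
`x, y ∈ J`). -/
theorem stmt_17 (C : FinCat Obj) [Fintype Obj] [Fintype C.Arr] (c : Obj)
    (s t : Cd C) (hs : s ∈ locSet C c) (ht : t ∈ locSet C c)
    (J : Set (Cd C)) (hJ : ∃ w : Cd C, J = {z | JE z w})
    (hreg : ∃ z ∈ J, ∃ z' : Cd C, z * z' * z = z)
    (hdisj : J ∩ locSet C c = ∅)
    (h0 : Cd.zero ∉ J) (h1 : Cd.one ∉ J) :
    (∀ x ∈ J, ∀ y ∈ J, x * x = x → y * y = y →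
      x * s * y = Cd.zero ∧ x * t * y = Cd.zero) ∧
    (∀ (Q : Type) [Semigroup Q] (θ : Cd C → Q) (z0 : Q),
      (∀ a b : Cd C, a ∈ FJ J ∪ J → b ∈ FJ J ∪ J → θ (a * b) = θ a * θ b) →
      (∀ u ∈ FJ J, θ u = z0) →
      (∀ q : Q, z0 * q = z0 ∧ q * z0 = z0) →
      ∀ x ∈ J, ∀ y ∈ J, θ (x * s * y) = θ (x * t * y)) := by
  constructor
  · intro x hx y hy hxx hyy
    constructor
    · have h := my_idem_mul_loc C c hs J hdisj h0 h1 hx hxx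
      rw [h]
      exact cdZero_mul C y
    · have h := my_idem_mul_loc C c ht J hdisj h0 h1 hx hxx
      rw [h]
      exact cdZero_mul C y
  · intro Q _ θ z0 hmul hF habs x hx y hy
    have hs' := my_key_claim C c s hs J hJ hdisj h0 h1 x hx y hy
    have ht' := my_key_claim C c t ht J hJ hdisj h0 h1 x hx y hy
    rw [hF _ hs', hF _ ht']
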